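/- Let G be a nontrivial finitely generated group all of whose finite simple quotients are abelian (i.e., for every normal subgroup N of G such that G/N is finite and simple, the quotient G/N is abelian). Then G is finitely annihilated if and only if the abelianisation G^ab is non-cyclic. -/

import Mathlib

/-- A group `G` is *finitely annihilated* if every element of `G` lies in some
proper normal finite-index subgroup of `G`. -/
def FinitelyAnnihilated (G : Type*) [Group G] : Prop :=
  ∀ g : G, ∃ N : Subgroup G, N.Normal ∧ N ≠ ⊤ ∧ N.FiniteIndex ∧ g ∈ N

open Subgroup
open scoped commutatorElement

/-- If `M` is a maximal element among the proper normal subgroups of `G`, then `G ⧸ M`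
is a simple group. -/
private lemma FA_aux_simple_quotient {G : Type*} [Group G] {M : Subgroup G} [M.Normal]
    (hne : M ≠ ⊤)
    (hmax : ∀ K : Subgroup G, K.Normal → M ≤ K → K ≠ ⊤ → K = M) :
    IsSimpleGroup (G ⧸ M) := by
  have hnt : Nontrivial (G ⧸ M) := by
    rcases subsingleton_or_nontrivial (G ⧸ M) with h | h
    · exact absurd (QuotientGroup.subgroup_eq_top_of_subsingleton M h) hne
    · exact h
  refine ⟨fun H hH => ?_⟩
  have hsurj : Function.Surjective (QuotientGroup.mk' M) := QuotientGroup.mk'_surjective M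
  set K := H.comap (QuotientGroup.mk' M) with hKdef
  have hKn : K.Normal := hH.comap _
  have hMK : M ≤ K := by
    conv_lhs => rw [← QuotientGroup.ker_mk' M]
    exact Subgroup.ker_le_comap _ _
  have hHmap : H = K.map (QuotientGroup.mk' M) :=
    (Subgroup.map_comap_eq_self_of_surjective hsurj H).symm
  by_cases htop : K = ⊤
  · right
    rw [hHmap, htop, ← MonoidHom.range_eq_map, MonoidHom.range_eq_top.mpr hsurj]
  · left
    have hKM : K = M := hmax K hKn hMK htop
    rw [hHmap, hKM]
    rw [eq_bot_iff]
    rintro y ⟨x, hxM, rfl⟩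
    simpa [Subgroup.mem_bot] using (QuotientGroup.eq_one_iff x).mpr hxM

/-- A simple commutative group is finite. -/
private lemma FA_aux_finite_of_simple_comm (Q : Type*) [CommGroup Q] [IsSimpleGroup Q] :
    Finite Q := by
  obtain ⟨g, hg⟩ := IsCyclic.exists_generator (α := Q)
  have hfin : IsOfFinOrder g := by
    rcases IsSimpleGroup.eq_bot_or_eq_top_of_normal (zpowers (g * g)) inferInstance with h | h
    · have hgg : g * g = 1 := by
        have : g * g ∈ zpowers (g * g) := mem_zpowers _
        rwa [h, Subgroup.mem_bot] at this
      exact isOfFinOrder_iff_pow_eq_one.mpr ⟨2, by norm_num, by rw [pow_two]; exact hgg⟩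
    · have hmem : g ∈ zpowers (g * g) := h ▸ mem_top g
      obtain ⟨k, hk⟩ := hmem
      have hzz : g ^ (2 * k - 1) = 1 := by
        have : g ^ (2 * k) = g := by
          rw [two_mul, zpow_add, ← mul_zpow]
          exact hk
        rw [zpow_sub, this, zpow_one, mul_inv_cancel]
      refine isOfFinOrder_iff_zpow_eq_one.mpr ⟨2 * k - 1, ?_, hzz⟩
      omega
  have htopset : (zpowers g : Set Q) = Set.univ := by
    have : zpowers g = ⊤ := by
      rw [eq_top_iff']
      exact hg
    rw [this, Subgroup.coe_top]
  have : (Set.univ : Set Q).Finite := htopset ▸ hfin.finite_zpowers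
  exact Set.finite_univ_iff.mp this

/-- Every nontrivial finitely generated commutative group has a proper finite-index
subgroup. -/
private lemma FA_aux_comm_exists_proper_finiteIndex (A : Type*) [CommGroup A] [Nontrivial A]
    (hfg : Group.FG A) : ∃ H : Subgroup A, H ≠ ⊤ ∧ H.FiniteIndex := by
  have haddfg : AddGroup.FG (Additive A) := GroupFG.iff_add_fg.mp hfg
  have hmf : Module.Finite ℤ (Additive A) := Module.Finite.iff_addGroup_fg.mpr haddfg
  have hcompact : IsCompactElement (⊤ : Submodule ℤ (Additive A)) :=
    (Submodule.fg_iff_compact ⊤).mp (Module.finite_def.mp hmf)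
  haveI : IsCoatomic (Submodule ℤ (Additive A)) :=
    CompleteLattice.coatomic_of_top_compact hcompact
  have hbotne : (⊥ : Submodule ℤ (Additive A)) ≠ ⊤ := by
    intro h
    have : Subsingleton (Additive A) := by
      constructor
      intro x y
      have hx : x ∈ (⊥ : Submodule ℤ (Additive A)) := h ▸ Submodule.mem_top
      have hy : y ∈ (⊥ : Submodule ℤ (Additive A)) := h ▸ Submodule.mem_top
      rw [Submodule.mem_bot] at hx hy
      rw [hx, hy]
    exact (not_subsingleton_iff_nontrivial.mpr inferInstance) this
  obtain ⟨P, hP⟩ : ∃ P : Submodule ℤ (Additive A), IsCoatom P := by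
    rcases (IsCoatomic.eq_top_or_exists_le_coatom (⊥ : Submodule ℤ (Additive A))) with h | ⟨P, hP, _⟩
    · exact absurd h hbotne
    · exact ⟨P, hP⟩
  let e : Subgroup A ≃o Submodule ℤ (Additive A) :=
    (Subgroup.toAddSubgroup).trans (AddSubgroup.toIntSubmodule)
  obtain ⟨H, rfl⟩ : ∃ H, e H = P := ⟨e.symm P, e.apply_symm_apply P⟩
  have hH : IsCoatom H := (e.isCoatom_iff H).mp hP
  refine ⟨H, hH.1, ?_⟩
  have hsimple : IsSimpleGroup (A ⧸ H) := by
    apply FA_aux_simple_quotient hH.1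
    intro K _ hMK hKt
    by_contra hne
    exact hKt (hH.2 K (hMK.lt_of_ne (Ne.symm hne)))
  haveI := hsimple
  haveI : Finite (A ⧸ H) := FA_aux_finite_of_simple_comm (A ⧸ H)
  exact Subgroup.finiteIndex_of_finite_quotient (H := H)

/-- A nontrivial finitely generated group all of whose finite simple quotients are
abelian is finitely annihilated iff its abelianisation is non-cyclic. -/
theorem finitelyAnnihilated_iff_abelianization_not_cyclic_of_finite_simple_quotients_abelian
    (G : Type*) [Group G] [Nontrivial G] (hfg : Group.FG G)
    (habelian : ∀ (N : Subgroup G) (hN : N.Normal),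
      letI := hN
      Finite (G ⧸ N) → IsSimpleGroup (G ⧸ N) → ∀ a b : G ⧸ N, a * b = b * a) :
    FinitelyAnnihilated G ↔ ¬ IsCyclic (Abelianization G) := by
  set φ : G →* Abelianization G := Abelianization.of with hφdef
  have hφsurj : Function.Surjective φ := by
    intro y
    exact Quotient.inductionOn y fun g => ⟨g, rfl⟩
  have hφker : φ.ker = commutator G := by
    ext x
    rw [MonoidHom.mem_ker]
    exact QuotientGroup.eq_one_iff x
  constructor
  · -- FA → not cyclic
    intro hFA hcyc
    obtain ⟨x, hx⟩ := hcyc.exists_generator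
    obtain ⟨g, rfl⟩ := hφsurj x
    obtain ⟨N, hNn, hNt, hNf, hgN⟩ := hFA g
    haveI := hNn
    haveI := hNf
    -- find a maximal proper normal subgroup containing N
    set S : Set (Subgroup G) := {K | K.Normal ∧ K ≠ ⊤ ∧ N ≤ K} with hSdef
    haveI : Finite (Subgroup (G ⧸ N)) :=
      Finite.of_injective (fun (H : Subgroup (G ⧸ N)) => (H : Set (G ⧸ N)))
        SetLike.coe_injective
    have himfin : ((fun K => K.map (QuotientGroup.mk' N)) '' S).Finite := Set.toFinite _
    obtain ⟨M, hMS, hMmax⟩ :=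
      Set.Finite.exists_maximalFor' (fun K => K.map (QuotientGroup.mk' N)) S himfin
        ⟨N, hNn, hNt, le_refl N⟩
    obtain ⟨hMn, hMt, hNM⟩ := hMS
    haveI := hMn
    haveI : M.FiniteIndex := Subgroup.finiteIndex_of_le hNM
    have hcomap : ∀ K ∈ S, M.map (QuotientGroup.mk' N) = K.map (QuotientGroup.mk' N) → M = K := by
      intro K hK heq
      have h1 : (M.map (QuotientGroup.mk' N)).comap (QuotientGroup.mk' N) = M := by
        rw [Subgroup.comap_map_eq, QuotientGroup.ker_mk', sup_eq_left.mpr hNM]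
      have h2 : (K.map (QuotientGroup.mk' N)).comap (QuotientGroup.mk' N) = K := by
        rw [Subgroup.comap_map_eq, QuotientGroup.ker_mk', sup_eq_left.mpr hK.2.2]
      rw [← h1, heq, h2]
    have hmax : ∀ K : Subgroup G, K.Normal → M ≤ K → K ≠ ⊤ → K = M := by
      intro K hKn hMK hKt
      have hKS : K ∈ S := ⟨hKn, hKt, hNM.trans hMK⟩
      exact (hcomap K hKS (le_antisymm (Subgroup.map_mono hMK) (hMmax hKS (Subgroup.map_mono hMK)))).symm
    have hsimple : IsSimpleGroup (G ⧸ M) := FA_aux_simple_quotient hMt hmax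
    have hcomm : ∀ a b : G ⧸ M, a * b = b * a :=
      habelian M hMn inferInstance hsimple
    -- commutator G ≤ M
    have hcommle : commutator G ≤ M := by
      rw [commutator_def, Subgroup.commutator_le]
      intro p _ q _
      have : (QuotientGroup.mk' M) ⁅p, q⁆ = 1 := by
        rw [commutatorElement_def]
        simp only [map_mul, map_inv]
        rw [hcomm ((QuotientGroup.mk' M) p) ((QuotientGroup.mk' M) q)]
        group
      rwa [← QuotientGroup.ker_mk' M, MonoidHom.mem_ker]
    -- the image of M in the abelianization is everything, contradiction
    have hxM : φ g ∈ M.map φ := ⟨g, hNM hgN, rfl⟩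
    have hmaptop : M.map φ = ⊤ := by
      rw [eq_top_iff]
      have : zpowers (φ g) = ⊤ := by
        rw [eq_top_iff']
        exact hx
      rw [← this]
      exact (zpowers_le).mpr hxM
    have : M = ⊤ := by
      have h1 : (M.map φ).comap φ = M := by
        rw [Subgroup.comap_map_eq, hφker, sup_eq_left.mpr hcommle]
      rw [← h1, hmaptop, Subgroup.comap_top]
    exact hMt this
  · -- not cyclic → FA
    intro hnc g
    set x := φ g with hxdef
    have hzne : zpowers x ≠ ⊤ := by
      intro h
      exact hnc ⟨⟨x, fun y => by show y ∈ zpowers x; rw [h]; trivial⟩⟩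
    -- quotient of the abelianization by ⟨x⟩
    set K₀ : Subgroup (Abelianization G) := zpowers x with hK₀def
    haveI : Nontrivial (Abelianization G ⧸ K₀) := by
      rcases subsingleton_or_nontrivial (Abelianization G ⧸ K₀) with h | h
      · exact absurd (QuotientGroup.subgroup_eq_top_of_subsingleton K₀ h) hzne
      · exact h
    have hQfg : Group.FG (Abelianization G ⧸ K₀) := by
      have h1 : Group.FG (Abelianization G) := Group.fg_of_surjective hφsurj (hG := hfg)
      exact Group.fg_of_surjective (QuotientGroup.mk'_surjective K₀) (hG := h1)
    obtain ⟨H, hHt, hHf⟩ :=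
      FA_aux_comm_exists_proper_finiteIndex (Abelianization G ⧸ K₀) hQfg
    -- pull back to the abelianization
    set K : Subgroup (Abelianization G) := H.comap (QuotientGroup.mk' K₀) with hKdef
    have hKt : K ≠ ⊤ := by
      intro h
      apply hHt
      rw [← Subgroup.map_comap_eq_self_of_surjective (QuotientGroup.mk'_surjective K₀) H,
        ← hKdef, h, ← MonoidHom.range_eq_map,
        MonoidHom.range_eq_top.mpr (QuotientGroup.mk'_surjective K₀)]
    have hKf : K.FiniteIndex := by
      constructor
      rw [hKdef, Subgroup.index_comap_of_surjective _ (QuotientGroup.mk'_surjective K₀)]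
      exact hHf.index_ne_zero
    have hxK : x ∈ K := by
      have : x ∈ K₀ := mem_zpowers x
      rw [hKdef]
      have hker : x ∈ (QuotientGroup.mk' K₀).ker := by
        rw [QuotientGroup.ker_mk']
        exact this
      exact Subgroup.ker_le_comap _ H hker
    -- pull back to G
    refine ⟨K.comap φ, Subgroup.Normal.comap inferInstance φ, ?_, ?_, hxK⟩
    · intro h
      apply hKt
      rw [← Subgroup.map_comap_eq_self_of_surjective hφsurj K, h,
        ← MonoidHom.range_eq_map, MonoidHom.range_eq_top.mpr hφsurj]
    · constructor
      rw [Subgroup.index_comap_of_surjective _ hφsurj]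
      exact hKf.index_ne_zero
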